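/- Let $A$ be an algebra over a field of characteristic $p > 0$ and let $x \in A$ be an element of finite multiplicative order. Then the $p$-prime part of the order of $x$ equals the minimum positive integer $n$ such that $x^n$ is unipotent (i.e., $(x^n - 1)^m = 0$ for some $m > 0$). -/

import Mathlib

/-- Let `A` be an algebra over a field of characteristic `p > 0` and `x ∈ A` of finite
multiplicative order. Then the `p`-prime part of the order of `x` is the least positive `n`
such that `x ^ n` is unipotent. -/
theorem pPrimePart_order_eq_least_unipotent
    {k A : Type*} [Field k] [Ring A] [Algebra k A] (p : ℕ) [CharP k p] (hp : 0 < p)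
    (x : A) (hx : ∃ N : ℕ, 0 < N ∧ x ^ N = 1) :
    IsLeast {n : ℕ | 0 < n ∧ ∃ m : ℕ, 0 < m ∧ (x ^ n - 1) ^ m = 0}
      (ordCompl[p] (orderOf x)) := by
  haveI : NeZero p := ⟨hp.ne'⟩
  have hppr : p.Prime := (CharP.char_is_prime_of_pos k p).out
  haveI := Fact.mk hppr
  have hfin : IsOfFinOrder x := by
    obtain ⟨N, hN, hxN⟩ := hx
    exact isOfFinOrder_iff_pow_eq_one.mpr ⟨N, hN, hxN⟩
  have hd : 0 < orderOf x := hfin.orderOf_pos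
  set d := orderOf x with hdd
  rcases subsingleton_or_nontrivial A with hS | hS
  · constructor
    · exact ⟨Nat.ordCompl_pos p hd.ne', 1, one_pos, Subsingleton.elim _ _⟩
    · rintro n ⟨hn, -⟩
      have : d = 1 := by
        have : x = 1 := Subsingleton.elim _ _
        simp [hdd, this]
      simp only [this]
      exact (le_of_eq (by simp : ordCompl[p] 1 = 1)).trans hn
  · haveI : CharP A p := charP_of_injective_algebraMap (algebraMap k A).injective p
    constructor
    · refine ⟨Nat.ordCompl_pos p hd.ne', p ^ (d.factorization p), pow_pos hp _, ?_⟩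
      have hc : Commute (x ^ (ordCompl[p] d)) (1 : A) := Commute.one_right _
      rw [sub_pow_char_pow_of_commute p _ hc]
      rw [one_pow, ← pow_mul, mul_comm, Nat.ordProj_mul_ordCompl_eq_self]
      simp [hdd, pow_orderOf_eq_one]
    · rintro n ⟨hn, m, hm, hnm⟩
      have hc : Commute (x ^ n) (1 : A) := Commute.one_right _
      have h1 : (x ^ n - 1) ^ (p ^ m) = 0 := by
        have hle : m ≤ p ^ m := Nat.le_of_lt (Nat.lt_pow_self hppr.one_lt : m < p ^ m)
        calc (x ^ n - 1) ^ (p ^ m)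
            = (x ^ n - 1) ^ m * (x ^ n - 1) ^ (p ^ m - m) := by
              rw [← pow_add, Nat.add_sub_cancel' hle]
          _ = 0 := by rw [hnm, zero_mul]
      rw [sub_pow_char_pow_of_commute p _ hc, one_pow, sub_eq_zero, ← pow_mul] at h1
      have hdvd : d ∣ n * p ^ m := orderOf_dvd_of_pow_eq_one h1
      have hdvd' : ordCompl[p] d ∣ n * p ^ m := (Nat.ordCompl_dvd d p).trans hdvd
      have hcop : Nat.Coprime (ordCompl[p] d) (p ^ m) :=
        ((Nat.coprime_ordCompl hppr hd.ne').symm).pow_right m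
      exact Nat.le_of_dvd hn (hcop.dvd_of_dvd_mul_right hdvd')
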